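/- Suppose H is a subgroup of SL_n(k), viewed inside GL_n(k). Let Δ ∈ k[M_{n,d}] be the determinant of the n×n matrix formed by the first n columns, i.e. Δ = det of the matrix (i,l) ↦ X(i,l) for i,l ∈ Fin n. Then for every F ∈ ^H k[M_{n,d}] there is a non-negative integer e such that Δ^e · F ∈ GL_d * j(^H k[M_{n,n}]). Consequently the quotient field of GL_d * j(^H k[M_{n,n}]) equals the quotient field of ^H k[M_{n,d}]. (Theorem 4.) -/

import Mathlib

open MvPolynomial

/-- The action of `g ∈ GL_d(k)` on `k[M_{n,d}]` by `(g * F)(x) = F(x·g)`,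
i.e. substituting `X(i,q) ↦ Σ_s X(i,s)·g(s,q)`. -/
noncomputable def colAct {k : Type*} [Field k] {n d : ℕ} (g : GL (Fin d) k) :
    MvPolynomial (Fin n × Fin d) k →ₐ[k] MvPolynomial (Fin n × Fin d) k :=
  aeval fun p => ∑ s : Fin d, X (p.1, s) * C ((g : Matrix (Fin d) (Fin d) k) s p.2)

/-- The action of `h ∈ GL_n(k)` on `k[M_{n,d}]` by `(h · F)(x) = F(h⁻¹·x)`,
i.e. substituting `X(i,q) ↦ Σ_s (h⁻¹)(i,s)·X(s,q)`. -/
noncomputable def rowAct {k : Type*} [Field k] {n d : ℕ} (h : GL (Fin n) k) :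
    MvPolynomial (Fin n × Fin d) k →ₐ[k] MvPolynomial (Fin n × Fin d) k :=
  aeval fun p =>
    ∑ s : Fin n, C (((h⁻¹ : GL (Fin n) k) : Matrix (Fin n) (Fin n) k) p.1 s) * X (s, p.2)

/-- The embedding `j : k[M_{n,n}] → k[M_{n,d}]`, `X(i,q) ↦ X(i,q)`. -/
noncomputable def jmap {k : Type*} [Field k] {n d : ℕ} (hnd : n ≤ d) :
    MvPolynomial (Fin n × Fin n) k →ₐ[k] MvPolynomial (Fin n × Fin d) k :=
  aeval fun p => X (p.1, Fin.castLE hnd p.2)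

/-- `^H k[M_{n,d}]`, the subalgebra of `H`-invariant polynomials. -/
def HinvAlg {k : Type*} [Field k] {n d : ℕ} (H : Subgroup (GL (Fin n) k)) :
    Subalgebra k (MvPolynomial (Fin n × Fin d) k) where
  carrier := {F | ∀ h ∈ H, rowAct h F = F}
  mul_mem' := fun ha hb h hh => by rw [map_mul, ha h hh, hb h hh]
  add_mem' := fun ha hb h hh => by rw [map_add, ha h hh, hb h hh]
  algebraMap_mem' := fun r h hh => by simp

/-- `GL_d * j(^H k[M_{n,n}])`: the `k`-subalgebra of `k[M_{n,d}]` generated by all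
polarizations `g * (j f)` of `H`-invariants of `n` vectors. -/
noncomputable def polarized {k : Type*} [Field k] {n d : ℕ} (hnd : n ≤ d)
    (H : Subgroup (GL (Fin n) k)) : Subalgebra k (MvPolynomial (Fin n × Fin d) k) :=
  Algebra.adjoin k
    {F | ∃ g : GL (Fin d) k, ∃ f ∈ HinvAlg (d := n) H, F = colAct g (jmap hnd f)}

namespace Stmt4Aux
variable {k : Type*} [Field k] {n d : ℕ}

lemma mem_HinvAlg {H : Subgroup (GL (Fin n) k)} {F : MvPolynomial (Fin n × Fin d) k} :
    F ∈ HinvAlg H ↔ ∀ h ∈ H, rowAct h F = F := Iff.rfl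

lemma colAct_X (g : GL (Fin d) k) (p : Fin n × Fin d) :
    colAct g (X p : MvPolynomial (Fin n × Fin d) k)
      = ∑ s : Fin d, X (p.1, s) * C ((g : Matrix (Fin d) (Fin d) k) s p.2) :=
  aeval_X _ _

lemma rowAct_X (h : GL (Fin n) k) (p : Fin n × Fin d) :
    rowAct h (X p : MvPolynomial (Fin n × Fin d) k)
      = ∑ s : Fin n, C (((h⁻¹ : GL (Fin n) k) : Matrix (Fin n) (Fin n) k) p.1 s) * X (s, p.2) :=
  aeval_X _ _

lemma jmap_X (hnd : n ≤ d) (p : Fin n × Fin n) :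
    jmap (k := k) hnd (X p) = X (p.1, Fin.castLE hnd p.2) :=
  aeval_X _ _

lemma colAct_one :
    (colAct (1 : GL (Fin d) k) : MvPolynomial (Fin n × Fin d) k →ₐ[k] _)
      = AlgHom.id k _ := by
  apply algHom_ext
  intro p
  simp [colAct_X, Matrix.one_apply, apply_ite C, mul_ite, Finset.sum_ite_eq' Finset.univ p.2]

lemma rowAct_comp_colAct (h : GL (Fin n) k) (g : GL (Fin d) k) :
    (rowAct (d := d) h).comp (colAct g) = (colAct g).comp (rowAct h) := by
  apply algHom_ext
  intro p
  simp only [AlgHom.comp_apply, colAct_X, rowAct_X, map_sum, map_mul, rowAct_X,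
    colAct_X, aeval_C, Finset.mul_sum, Finset.sum_mul]
  rw [Finset.sum_comm]
  apply Finset.sum_congr rfl; intro s _
  apply Finset.sum_congr rfl; intro t _
  simp only [rowAct, colAct, aeval_C, algebraMap_eq]
  ring

lemma rowAct_comp_jmap (hnd : n ≤ d) (h : GL (Fin n) k) :
    (rowAct (d := d) h).comp (jmap hnd) = (jmap hnd).comp (rowAct (d := n) h) := by
  apply algHom_ext
  intro p
  simp [AlgHom.comp_apply, jmap_X, rowAct_X, map_sum]

lemma polarized_le_HinvAlg (hnd : n ≤ d) (H : Subgroup (GL (Fin n) k)) :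
    polarized hnd H ≤ HinvAlg H := by
  apply Algebra.adjoin_le
  rintro F ⟨g, f, hf, rfl⟩
  intro h hh
  have h1 : rowAct (d := d) h (colAct g (jmap hnd f)) = colAct g (rowAct h (jmap hnd f)) := by
    have := congrArg (fun φ => φ (jmap hnd f)) (rowAct_comp_colAct h g)
    simpa using this
  have h2 : rowAct (d := d) h (jmap hnd f) = jmap hnd (rowAct h f) := by
    have := congrArg (fun φ => φ f) (rowAct_comp_jmap hnd h)
    simpa using this
  rw [h1, h2, hf h hh]
end Stmt4Aux

namespace Stmt4Aux
variable {k : Type*} [Field k] {n d : ℕ}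

lemma algHom_map_det {A B : Type*} [CommRing A] [CommRing B] [Algebra k A] [Algebra k B]
    (f : A →ₐ[k] B) {m : ℕ} (M : Matrix (Fin m) (Fin m) A) : f M.det = (M.map f).det := by
  simpa [RingHom.mapMatrix_apply] using RingHom.map_det (f : A →+* B) M

/-- The generic `n × n` matrix of the first `n` columns. -/
noncomputable def Mgen (k : Type*) [Field k] {n d : ℕ} (hnd : n ≤ d) :
    Matrix (Fin n) (Fin n) (MvPolynomial (Fin n × Fin d) k) :=
  Matrix.of fun i l : Fin n => X (i, Fin.castLE hnd l)

noncomputable def detd (k : Type*) [Field k] {n d : ℕ} (hnd : n ≤ d) :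
    MvPolynomial (Fin n × Fin d) k := (Mgen k hnd).det

noncomputable def detn (k : Type*) [Field k] (n : ℕ) : MvPolynomial (Fin n × Fin n) k :=
  (Matrix.of fun i l : Fin n => X (i, l)).det

noncomputable def Dcol (k : Type*) [Field k] {n d : ℕ} (hnd : n ≤ d) (l : Fin n) (q : Fin d) :
    MvPolynomial (Fin n × Fin d) k :=
  ((Mgen k hnd).updateCol l fun i => X (i, q)).det

lemma jmap_detn (hnd : n ≤ d) : jmap (k := k) hnd (detn k n) = detd k hnd := by
  rw [detn, detd, algHom_map_det]
  congr 1
  ext i l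
  simp [Mgen, Matrix.map_apply, jmap_X]

lemma detn_mem (H : Subgroup (GL (Fin n) k))
    (hH : ∀ h ∈ H, ((h : Matrix (Fin n) (Fin n) k)).det = 1) :
    detn k n ∈ HinvAlg (d := n) H := by
  intro h hh
  rw [detn, algHom_map_det]
  have hmat : (Matrix.of fun i l : Fin n => X (i, l)).map
        (rowAct (k := k) (d := n) h)
      = (((h⁻¹ : GL (Fin n) k) : Matrix (Fin n) (Fin n) k).map C)
        * (Matrix.of fun i l : Fin n => X (i, l)) := by
    ext i l
    simp [Matrix.map_apply, Matrix.mul_apply, rowAct_X]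
  rw [hmat, Matrix.det_mul]
  have hC : (((h⁻¹ : GL (Fin n) k) : Matrix (Fin n) (Fin n) k).map
        (C : k → MvPolynomial (Fin n × Fin n) k)).det
      = C (((h⁻¹ : GL (Fin n) k) : Matrix (Fin n) (Fin n) k).det) := by
    simpa [RingHom.mapMatrix_apply] using
      (RingHom.map_det (C : k →+* MvPolynomial (Fin n × Fin n) k)
        ((h⁻¹ : GL (Fin n) k) : Matrix (Fin n) (Fin n) k)).symm
  have hdet : ((h⁻¹ : GL (Fin n) k) : Matrix (Fin n) (Fin n) k).det = 1 :=
    hH _ (H.inv_mem hh)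
  rw [hC, hdet, map_one, one_mul]

lemma detd_ne_zero (hnd : n ≤ d) : detd k hnd ≠ 0 := by
  intro h0
  have := congrArg (eval fun p : Fin n × Fin d => if (p.1 : ℕ) = (p.2 : ℕ) then (1:k) else 0) h0
  rw [detd, RingHom.map_det (eval _ : _ →+* k), RingHom.mapMatrix_apply] at this
  have hmat : (Mgen k hnd).map
        (eval fun p : Fin n × Fin d => if (p.1 : ℕ) = (p.2 : ℕ) then (1:k) else 0)
      = (1 : Matrix (Fin n) (Fin n) k) := by
    ext i l
    simp [Mgen, Matrix.map_apply, Matrix.one_apply, Fin.ext_iff]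
  rw [hmat] at this
  simp at this

/-- Permutation matrices as units. -/
noncomputable def permGL (k : Type*) [Field k] {d : ℕ} (τ : Equiv.Perm (Fin d)) :
    GL (Fin d) k where
  val := Matrix.of fun s t : Fin d => if s = τ t then 1 else 0
  inv := Matrix.of fun s t : Fin d => if s = τ⁻¹ t then 1 else 0
  val_inv := by
    ext s t
    rw [Matrix.mul_apply, Finset.sum_eq_single (τ⁻¹ t)]
    · simp [Matrix.one_apply]
    · intro r _ hr
      have hr' : r ≠ τ.symm t := hr
      simp [hr']
    · simp
  inv_val := by
    ext s t
    rw [Matrix.mul_apply, Finset.sum_eq_single (τ t)]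
    · simp [Matrix.one_apply, Equiv.symm_apply_eq]
    · intro r _ hr
      simp [hr]
    · simp

lemma colAct_permGL_X (τ : Equiv.Perm (Fin d)) (p : Fin n × Fin d) :
    colAct (permGL k τ) (X p : MvPolynomial (Fin n × Fin d) k) = X (p.1, τ p.2) := by
  rw [colAct_X]
  simp [permGL, apply_ite C, mul_ite, Finset.sum_ite_eq' Finset.univ (τ p.2)]

end Stmt4Aux

namespace Stmt4Aux
variable {k : Type*} [Field k] {n d : ℕ}

lemma detd_mem (hnd : n ≤ d) (H : Subgroup (GL (Fin n) k))
    (hH : ∀ h ∈ H, ((h : Matrix (Fin n) (Fin n) k)).det = 1) :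
    detd k hnd ∈ polarized hnd H := by
  apply Algebra.subset_adjoin
  refine ⟨1, detn k n, detn_mem H hH, ?_⟩
  rw [colAct_one, AlgHom.id_apply, jmap_detn]

lemma jmap_mem (hnd : n ≤ d) (H : Subgroup (GL (Fin n) k))
    {f : MvPolynomial (Fin n × Fin n) k} (hf : f ∈ HinvAlg (d := n) H) :
    jmap hnd f ∈ polarized hnd H := by
  apply Algebra.subset_adjoin
  refine ⟨1, f, hf, ?_⟩
  rw [colAct_one, AlgHom.id_apply]

lemma Dcol_mem (hnd : n ≤ d) (H : Subgroup (GL (Fin n) k))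
    (hH : ∀ h ∈ H, ((h : Matrix (Fin n) (Fin n) k)).det = 1)
    (l : Fin n) (q : Fin d) (hq : n ≤ (q : ℕ)) :
    Dcol k hnd l q ∈ polarized hnd H := by
  apply Algebra.subset_adjoin
  refine ⟨permGL k (Equiv.swap (Fin.castLE hnd l) q), detn k n, detn_mem H hH, ?_⟩
  rw [jmap_detn, detd, algHom_map_det, Dcol]
  congr 1
  refine Matrix.ext fun i l' => ?_
  simp only [Mgen, Matrix.map_apply, Matrix.of_apply, colAct_permGL_X,
    Matrix.updateCol_apply]
  by_cases hl : l' = l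
  · subst hl
    rw [if_pos rfl, Equiv.swap_apply_left]
  · rw [if_neg hl]
    have h1 : Fin.castLE hnd l' ≠ Fin.castLE hnd l := by
      simpa [Fin.ext_iff] using fun hc => hl (Fin.ext hc)
    have h2 : Fin.castLE hnd l' ≠ q := by
      intro hc
      have hval : (l' : ℕ) = (q : ℕ) := congrArg Fin.val hc
      have := l'.isLt
      omega
    rw [Equiv.swap_apply_of_ne_of_ne h1 h2]

lemma row_mul_Dcol (hnd : n ≤ d) (i : Fin n) (q : Fin d) :
    ∑ l : Fin n, X (i, Fin.castLE hnd l) * Dcol k hnd l q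
      = detd k hnd * X (i, q) := by
  have := congrFun (Matrix.mulVec_cramer (Mgen k hnd)
    (fun i => (X (i, q) : MvPolynomial (Fin n × Fin d) k))) i
  simp only [Matrix.mulVec, dotProduct, Pi.smul_apply, smul_eq_mul] at this
  rw [detd, ← this]
  apply Finset.sum_congr rfl
  intro l _
  rw [Matrix.cramer_apply]
  rfl

end Stmt4Aux

namespace Stmt4Aux
variable {k : Type*} [Field k] {n d : ℕ}

/-- Substitute the last `d-n` columns by products `a·c`. -/
noncomputable def subMul (k : Type*) [Field k] {n d : ℕ} (hnd : n ≤ d) :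
    MvPolynomial (Fin n × Fin d) k →ₐ[k] MvPolynomial (Fin n × Fin d) k :=
  aeval fun p => if (p.2 : ℕ) < n then X p
    else ∑ l : Fin n, X (p.1, Fin.castLE hnd l) * X (l, p.2)

/-- The row action on the first `n` columns only. -/
noncomputable def rowActA (k : Type*) [Field k] {n d : ℕ} (h : GL (Fin n) k) :
    MvPolynomial (Fin n × Fin d) k →ₐ[k] MvPolynomial (Fin n × Fin d) k :=
  aeval fun p => if (p.2 : ℕ) < n then
      ∑ s : Fin n, C (((h⁻¹ : GL (Fin n) k) : Matrix (Fin n) (Fin n) k) p.1 s) * X (s, p.2)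
    else X p

lemma subMul_X (hnd : n ≤ d) (p : Fin n × Fin d) :
    subMul k hnd (X p) = if (p.2 : ℕ) < n then X p
      else ∑ l : Fin n, X (p.1, Fin.castLE hnd l) * X (l, p.2) :=
  aeval_X _ _

lemma rowActA_X (h : GL (Fin n) k) (p : Fin n × Fin d) :
    rowActA k h (X p) = if (p.2 : ℕ) < n then
        ∑ s : Fin n, C (((h⁻¹ : GL (Fin n) k) : Matrix (Fin n) (Fin n) k) p.1 s) * X (s, p.2)
      else X p :=
  aeval_X _ _

lemma subMul_C (hnd : n ≤ d) (a : k) : subMul k hnd (C a) = C a := by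
  simp [subMul, algebraMap_eq]

lemma rowActA_C (h : GL (Fin n) k) (a : k) :
    rowActA k (d := d) h (C a) = C a := by
  simp [rowActA, algebraMap_eq]

lemma rowActA_comp_subMul (hnd : n ≤ d) (h : GL (Fin n) k) :
    (rowActA k h).comp (subMul k hnd) = (subMul k hnd).comp (rowAct h) := by
  apply algHom_ext
  rintro ⟨i, q⟩
  by_cases hq : (q : ℕ) < n
  · simp [AlgHom.comp_apply, rowAct_X, map_sum, map_mul, subMul_X, subMul_C,
      rowActA_X, rowActA_C, if_pos hq]
  · simp only [AlgHom.comp_apply, rowAct_X, map_sum, map_mul, subMul_X, subMul_C,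
      rowActA_X, rowActA_C, if_neg hq, Fin.coe_castLE, Fin.is_lt, if_true]
    simp only [Finset.sum_mul, Finset.mul_sum]
    rw [Finset.sum_comm]
    refine Finset.sum_congr rfl fun s _ => Finset.sum_congr rfl fun l _ => by ring

/-- Splitting the variables into the "late" columns and the first `n` columns. -/
def esplit (hnd : n ≤ d) :
    (Fin n × Fin d) ≃ ((Fin n × {q : Fin d // n ≤ (q : ℕ)}) ⊕ (Fin n × Fin n)) where
  toFun p := if h : (p.2 : ℕ) < n then Sum.inr (p.1, ⟨(p.2 : ℕ), h⟩)
    else Sum.inl (p.1, ⟨p.2, le_of_not_gt h⟩)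
  invFun x := Sum.elim (fun p => (p.1, (p.2 : Fin d))) (fun p => (p.1, Fin.castLE hnd p.2)) x
  left_inv := by
    rintro ⟨i, q⟩
    by_cases h : (q : ℕ) < n <;> simp [h, Fin.ext_iff]
  right_inv := by
    rintro (⟨i, q, hq⟩ | ⟨i, l⟩)
    · simp [Nat.not_lt.mpr hq]
    · simp [l.isLt, Fin.ext_iff]

lemma key_equiv (hnd : n ≤ d) (h : GL (Fin n) k) :
    ((sumAlgEquiv k (Fin n × {q : Fin d // n ≤ (q : ℕ)}) (Fin n × Fin n)).toAlgHom.comp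
        ((rename (esplit hnd)).comp (rowActA k h)))
      = (mapAlgHom (rowAct (d := n) h)).comp
          ((sumAlgEquiv k _ _).toAlgHom.comp (rename (esplit hnd))) := by
  apply algHom_ext
  rintro ⟨i, q⟩
  by_cases hq : (q : ℕ) < n
  · simp only [AlgHom.comp_apply, rowActA_X, if_pos hq, map_sum, map_mul, rename_X,
      rename_C, AlgEquiv.toAlgHom_eq_coe, AlgHom.coe_coe, AlgEquiv.coe_toAlgHom]
    have he : ∀ s : Fin n, esplit hnd (s, q) = Sum.inr (s, (⟨(q : ℕ), hq⟩ : Fin n)) := by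
      intro s; simp [esplit, hq]
    simp only [he]
    simp [sumAlgEquiv_C_inl, sumAlgEquiv_X_inl, sumAlgEquiv_X_inr, sumToIter_Xr, sumToIter_C, mapAlgHom_apply, map_C,
      rowAct_X, map_sum]
  · simp only [AlgHom.comp_apply, rowActA_X, if_neg hq, rename_X,
      AlgEquiv.toAlgHom_eq_coe, AlgHom.coe_coe, AlgEquiv.coe_toAlgHom]
    rw [show esplit hnd (i, q) = Sum.inl (i, ⟨q, le_of_not_gt hq⟩) from by
      simp [esplit, hq]]
    simp [sumAlgEquiv_C_inl, sumAlgEquiv_X_inl, sumAlgEquiv_X_inr, sumToIter_Xl, mapAlgHom_apply, map_X]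

lemma coeff_invariant (hnd : n ≤ d) (H : Subgroup (GL (Fin n) k))
    {F : MvPolynomial (Fin n × Fin d) k} (hF : F ∈ HinvAlg (d := d) H)
    (m : (Fin n × {q : Fin d // n ≤ (q : ℕ)}) →₀ ℕ) :
    coeff m ((sumAlgEquiv k (Fin n × {q : Fin d // n ≤ (q : ℕ)}) (Fin n × Fin n))
        (rename (esplit hnd) (subMul k hnd F))) ∈ HinvAlg (d := n) H := by
  intro h hh
  have e1 : rowActA k h (subMul k hnd F) = subMul k hnd F := by
    have := congrArg (fun φ => φ F) (rowActA_comp_subMul hnd h)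
    simp only [AlgHom.comp_apply] at this
    rw [this, hF h hh]
  have e2 := congrArg (fun φ => φ (subMul k hnd F)) (key_equiv hnd h)
  simp only [AlgHom.comp_apply, e1, AlgEquiv.toAlgHom_eq_coe, AlgHom.coe_coe, AlgEquiv.coe_toAlgHom,
    mapAlgHom_apply] at e2
  conv_rhs => rw [e2]
  set f : MvPolynomial (Fin n × Fin n) k →+* MvPolynomial (Fin n × Fin n) k :=
    (rowAct (k := k) (d := n) h).toRingHom with hf
  have e3 : eval₂ (C.comp f) X
        ((sumAlgEquiv k (Fin n × {q : Fin d // n ≤ (q : ℕ)}) (Fin n × Fin n))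
          (rename (esplit hnd) (subMul k hnd F)))
      = map f
        ((sumAlgEquiv k (Fin n × {q : Fin d // n ≤ (q : ℕ)}) (Fin n × Fin n))
          (rename (esplit hnd) (subMul k hnd F))) := by
    rw [map_eq_eval₂Hom_C_comp, coe_eval₂Hom]
  rw [show (↑(rowAct (k := k) (d := n) h) : MvPolynomial (Fin n × Fin n) k →+* _) = f from rfl,
    coeff_map]
  rfl

end Stmt4Aux

namespace Stmt4Aux
set_option maxHeartbeats 1000000
set_option synthInstance.maxHeartbeats 400000
variable {k : Type*} [Field k] {n d : ℕ}

lemma jmap_C (hnd : n ≤ d) (a : k) : jmap (k := k) hnd (C a) = C a := by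
  simp [jmap, algebraMap_eq]

lemma algMap_detd_ne_zero (hnd : n ≤ d) :
    algebraMap (MvPolynomial (Fin n × Fin d) k)
      (FractionRing (MvPolynomial (Fin n × Fin d) k)) (detd k hnd) ≠ 0 :=
  (map_ne_zero_iff _ (IsFractionRing.injective _ _)).mpr (detd_ne_zero hnd)

lemma main_eval (hnd : n ≤ d) (F : MvPolynomial (Fin n × Fin d) k) :
    eval₂
      ((algebraMap (MvPolynomial (Fin n × Fin d) k)
          (FractionRing (MvPolynomial (Fin n × Fin d) k))).comp (jmap hnd).toRingHom)
      (fun c : Fin n × {q : Fin d // n ≤ (q : ℕ)} =>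
        algebraMap _ _ (Dcol k hnd c.1 c.2.1)
          * (algebraMap (MvPolynomial (Fin n × Fin d) k)
              (FractionRing (MvPolynomial (Fin n × Fin d) k)) (detd k hnd))⁻¹)
      ((sumAlgEquiv k (Fin n × {q : Fin d // n ≤ (q : ℕ)}) (Fin n × Fin n))
        (rename (esplit hnd) (subMul k hnd F)))
    = algebraMap _ _ F := by
  have hΔ := algMap_detd_ne_zero (k := k) hnd
  have hom_eq : ((eval₂Hom ((algebraMap (MvPolynomial (Fin n × Fin d) k)
          (FractionRing (MvPolynomial (Fin n × Fin d) k))).comp (jmap hnd).toRingHom)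
      (fun c : Fin n × {q : Fin d // n ≤ (q : ℕ)} =>
        algebraMap _ _ (Dcol k hnd c.1 c.2.1)
          * (algebraMap (MvPolynomial (Fin n × Fin d) k)
              (FractionRing (MvPolynomial (Fin n × Fin d) k)) (detd k hnd))⁻¹)).comp
      ((sumAlgEquiv k (Fin n × {q : Fin d // n ≤ (q : ℕ)}) (Fin n × Fin n)).toAlgHom.toRingHom.comp
        ((rename (esplit hnd)).toRingHom.comp (subMul k hnd).toRingHom)))
      = algebraMap (MvPolynomial (Fin n × Fin d) k)
          (FractionRing (MvPolynomial (Fin n × Fin d) k)) := by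
    apply ringHom_ext
    · intro a
      simp only [RingHom.comp_apply, AlgHom.toRingHom_eq_coe, AlgHom.coe_toRingHom,
        AlgEquiv.toAlgHom_eq_coe, AlgHom.coe_coe, AlgEquiv.coe_toAlgHom, subMul_C, rename_C]
      rw [show ((sumAlgEquiv k (Fin n × {q : Fin d // n ≤ (q : ℕ)}) (Fin n × Fin n))
          (C a) : MvPolynomial _ (MvPolynomial (Fin n × Fin n) k)) = C (C a) from by
        simp [sumAlgEquiv_C_inl, sumAlgEquiv_X_inl, sumAlgEquiv_X_inr, sumToIter_C]]
      rw [coe_eval₂Hom, eval₂_C]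
      simp [jmap_C]
    · rintro ⟨i, q⟩
      simp only [RingHom.comp_apply, AlgHom.toRingHom_eq_coe, AlgHom.coe_toRingHom,
        AlgEquiv.toAlgHom_eq_coe, AlgHom.coe_coe, AlgEquiv.coe_toAlgHom, subMul_X]
      by_cases hq : (q : ℕ) < n
      · rw [if_pos hq, rename_X,
          show esplit hnd (i, q) = Sum.inr (i, (⟨(q : ℕ), hq⟩ : Fin n)) from by
            simp [esplit, hq]]
        rw [show ((sumAlgEquiv k (Fin n × {q : Fin d // n ≤ (q : ℕ)}) (Fin n × Fin n))
            (X (Sum.inr (i, (⟨(q : ℕ), hq⟩ : Fin n))))) = C (X (i, (⟨(q : ℕ), hq⟩ : Fin n)))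
            from by simp [sumAlgEquiv_C_inl, sumAlgEquiv_X_inl, sumAlgEquiv_X_inr, sumToIter_Xr]]
        rw [coe_eval₂Hom, eval₂_C]
        simp only [RingHom.comp_apply, AlgHom.toRingHom_eq_coe, AlgHom.coe_toRingHom,
          jmap_X]
        congr 2
      · rw [if_neg hq]
        simp only [map_sum, map_mul, rename_X]
        have he1 : ∀ l : Fin n, esplit hnd (l, q) = Sum.inl (l, ⟨q, le_of_not_gt hq⟩) := by
          intro l; simp [esplit, hq]
        have he2 : ∀ i l : Fin n, esplit hnd (i, Fin.castLE hnd l) = Sum.inr (i, l) := by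
          intro i l
          simp only [esplit, Equiv.coe_fn_mk, Fin.coe_castLE, l.isLt, dif_pos]
        simp only [he1, he2]
        have hsum : ∀ l : Fin n,
            (eval₂Hom ((algebraMap (MvPolynomial (Fin n × Fin d) k)
                (FractionRing (MvPolynomial (Fin n × Fin d) k))).comp (jmap hnd).toRingHom)
              (fun c : Fin n × {q : Fin d // n ≤ (q : ℕ)} =>
                algebraMap _ _ (Dcol k hnd c.1 c.2.1)
                  * (algebraMap (MvPolynomial (Fin n × Fin d) k)
                      (FractionRing (MvPolynomial (Fin n × Fin d) k)) (detd k hnd))⁻¹))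
              ((sumAlgEquiv k (Fin n × {q : Fin d // n ≤ (q : ℕ)})
                (Fin n × Fin n)) (X (Sum.inr (i, l))))
            * (eval₂Hom ((algebraMap (MvPolynomial (Fin n × Fin d) k)
                (FractionRing (MvPolynomial (Fin n × Fin d) k))).comp (jmap hnd).toRingHom)
              (fun c : Fin n × {q : Fin d // n ≤ (q : ℕ)} =>
                algebraMap _ _ (Dcol k hnd c.1 c.2.1)
                  * (algebraMap (MvPolynomial (Fin n × Fin d) k)
                      (FractionRing (MvPolynomial (Fin n × Fin d) k)) (detd k hnd))⁻¹))
              ((sumAlgEquiv k (Fin n × {q : Fin d // n ≤ (q : ℕ)})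
                (Fin n × Fin n)) (X (Sum.inl (l, ⟨q, le_of_not_gt hq⟩))))
            = algebraMap (MvPolynomial (Fin n × Fin d) k)
                (FractionRing (MvPolynomial (Fin n × Fin d) k))
                (X (i, Fin.castLE hnd l) * Dcol k hnd l q)
                * (algebraMap (MvPolynomial (Fin n × Fin d) k)
                    (FractionRing (MvPolynomial (Fin n × Fin d) k)) (detd k hnd))⁻¹ := by
          intro l
          rw [show ((sumAlgEquiv k (Fin n × {q : Fin d // n ≤ (q : ℕ)}) (Fin n × Fin n))
              (X (Sum.inr (i, l)))) = C (X (i, l)) from by simp [sumAlgEquiv_C_inl, sumAlgEquiv_X_inl, sumAlgEquiv_X_inr]]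
          rw [show ((sumAlgEquiv k (Fin n × {q : Fin d // n ≤ (q : ℕ)}) (Fin n × Fin n))
              (X (Sum.inl (l, (⟨q, le_of_not_gt hq⟩ : {q : Fin d // n ≤ (q : ℕ)})))))
              = X (l, ⟨q, le_of_not_gt hq⟩) from by simp [sumAlgEquiv_C_inl, sumAlgEquiv_X_inl, sumAlgEquiv_X_inr]]
          simp only [coe_eval₂Hom, eval₂_C, eval₂_X, RingHom.comp_apply,
            AlgHom.toRingHom_eq_coe, AlgHom.coe_toRingHom, jmap_X, map_mul]
          ring
        simp only [AlgHom.toRingHom_eq_coe] at hsum ⊢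
        rw [Finset.sum_congr rfl fun l _ => hsum l, ← Finset.sum_mul, ← map_sum,
          row_mul_Dcol hnd i q, map_mul, mul_comm (algebraMap _ _ (detd k hnd)),
          mul_assoc, mul_inv_cancel₀ hΔ, mul_one]
  have hF := congrArg (fun φ : MvPolynomial (Fin n × Fin d) k →+*
      FractionRing (MvPolynomial (Fin n × Fin d) k) => φ F) hom_eq
  simpa only [RingHom.comp_apply, AlgHom.toRingHom_eq_coe, AlgHom.coe_toRingHom,
    AlgEquiv.toAlgHom_eq_coe, AlgHom.coe_coe, AlgEquiv.coe_toAlgHom, coe_eval₂Hom] using hF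

/-- The `detd`-localization of `polarized` inside the fraction field. -/
noncomputable def locSub (hnd : n ≤ d) (H : Subgroup (GL (Fin n) k))
    (hH : ∀ h ∈ H, ((h : Matrix (Fin n) (Fin n) k)).det = 1) :
    Subring (FractionRing (MvPolynomial (Fin n × Fin d) k)) where
  carrier := {y | ∃ e : ℕ, ∃ p ∈ polarized hnd H,
    y * (algebraMap _ _ (detd k hnd)) ^ e = algebraMap _ _ p}
  zero_mem' := ⟨0, 0, zero_mem _, by simp⟩
  one_mem' := ⟨0, 1, one_mem _, by simp⟩
  add_mem' := by
    rintro a b ⟨e1, p1, h1, hq1⟩ ⟨e2, p2, h2, hq2⟩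
    refine ⟨e1 + e2, p1 * detd k hnd ^ e2 + p2 * detd k hnd ^ e1,
      add_mem (mul_mem h1 (pow_mem (detd_mem hnd H hH) e2))
        (mul_mem h2 (pow_mem (detd_mem hnd H hH) e1)), ?_⟩
    rw [map_add, map_mul, map_mul, map_pow, map_pow, ← hq1, ← hq2]
    ring
  neg_mem' := by
    rintro a ⟨e, p, hp, hq⟩
    exact ⟨e, -p, neg_mem hp, by rw [map_neg, ← hq]; ring⟩
  mul_mem' := by
    rintro a b ⟨e1, p1, h1, hq1⟩ ⟨e2, p2, h2, hq2⟩
    refine ⟨e1 + e2, p1 * p2, mul_mem h1 h2, ?_⟩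
    rw [map_mul, ← hq1, ← hq2]
    ring

lemma part1 (hnd : n ≤ d) (H : Subgroup (GL (Fin n) k))
    (hH : ∀ h ∈ H, ((h : Matrix (Fin n) (Fin n) k)).det = 1)
    {F : MvPolynomial (Fin n × Fin d) k} (hF : F ∈ HinvAlg (d := d) H) :
    ∃ e : ℕ, detd k hnd ^ e * F ∈ polarized hnd H := by
  have hΔ := algMap_detd_ne_zero (k := k) hnd
  have hmem : algebraMap (MvPolynomial (Fin n × Fin d) k)
      (FractionRing (MvPolynomial (Fin n × Fin d) k)) F ∈ locSub hnd H hH := by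
    rw [← main_eval hnd F]
    apply eval₂_mem
    · intro m _
      refine ⟨0, jmap hnd (coeff m _), jmap_mem hnd H (coeff_invariant hnd H hF m), ?_⟩
      rw [pow_zero, mul_one]
      simp [RingHom.comp_apply]
    · rintro ⟨l, q, hq⟩
      refine ⟨1, Dcol k hnd l q, Dcol_mem hnd H hH l q hq, ?_⟩
      rw [pow_one, mul_assoc, inv_mul_cancel₀ hΔ, mul_one]
  obtain ⟨e, p, hp, heq⟩ := hmem
  refine ⟨e, ?_⟩
  have hid : algebraMap (MvPolynomial (Fin n × Fin d) k)
      (FractionRing (MvPolynomial (Fin n × Fin d) k)) (detd k hnd ^ e * F)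
      = algebraMap _ _ p := by
    rw [map_mul, map_pow, mul_comm]
    exact heq
  rwa [IsFractionRing.injective _ _ hid]

end Stmt4Aux

/-- Theorem 4: for `H ≤ SL_n`, every invariant `F ∈ ^H k[M_{n,d}]` satisfies
`Δ^e·F ∈ GL_d * j(^H k[M_{n,n}])` for some `e ≥ 0`; consequently the two algebras have the
same quotient field (inside the fraction field of `k[M_{n,d}]`). -/
theorem stmt4 {k : Type*} [Field k] [IsAlgClosed k] {n d : ℕ} (hn : 0 < n) (hnd : n ≤ d)
    (H : Subgroup (GL (Fin n) k))
    (hH : ∀ h ∈ H, ((h : Matrix (Fin n) (Fin n) k)).det = 1) :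
    (∀ F ∈ HinvAlg (d := d) H, ∃ e : ℕ,
        (Matrix.of fun i l : Fin n => X (i, Fin.castLE hnd l)).det ^ e * F ∈ polarized hnd H)
    ∧ Subfield.closure
        ((algebraMap (MvPolynomial (Fin n × Fin d) k)
            (FractionRing (MvPolynomial (Fin n × Fin d) k))) '' (polarized hnd H : Set _))
      = Subfield.closure
        ((algebraMap (MvPolynomial (Fin n × Fin d) k)
            (FractionRing (MvPolynomial (Fin n × Fin d) k))) '' (HinvAlg (d := d) H : Set _)) := by
  constructor
  · intro F hF
    exact Stmt4Aux.part1 hnd H hH hF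
  · apply le_antisymm
    · exact Subfield.closure_mono
        (Set.image_mono (Stmt4Aux.polarized_le_HinvAlg hnd H))
    · rw [Subfield.closure_le]
      rintro y ⟨F, hF, rfl⟩
      obtain ⟨e, hmem⟩ := Stmt4Aux.part1 hnd H hH hF
      have hΔ := Stmt4Aux.algMap_detd_ne_zero (k := k) hnd
      have h1 : algebraMap (MvPolynomial (Fin n × Fin d) k)
            (FractionRing (MvPolynomial (Fin n × Fin d) k))
            (Stmt4Aux.detd k hnd ^ e * F)
          ∈ Subfield.closure ((algebraMap (MvPolynomial (Fin n × Fin d) k)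
              (FractionRing (MvPolynomial (Fin n × Fin d) k))) '' (polarized hnd H : Set _)) :=
        Subfield.subset_closure ⟨_, hmem, rfl⟩
      have h2 : algebraMap (MvPolynomial (Fin n × Fin d) k)
            (FractionRing (MvPolynomial (Fin n × Fin d) k)) (Stmt4Aux.detd k hnd)
          ∈ Subfield.closure ((algebraMap (MvPolynomial (Fin n × Fin d) k)
              (FractionRing (MvPolynomial (Fin n × Fin d) k))) '' (polarized hnd H : Set _)) :=
        Subfield.subset_closure ⟨_, Stmt4Aux.detd_mem hnd H hH, rfl⟩
      have hFe : algebraMap (MvPolynomial (Fin n × Fin d) k)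
            (FractionRing (MvPolynomial (Fin n × Fin d) k)) F
          = algebraMap (MvPolynomial (Fin n × Fin d) k)
              (FractionRing (MvPolynomial (Fin n × Fin d) k))
              (Stmt4Aux.detd k hnd ^ e * F)
            * (algebraMap (MvPolynomial (Fin n × Fin d) k)
                (FractionRing (MvPolynomial (Fin n × Fin d) k))
                (Stmt4Aux.detd k hnd) ^ e)⁻¹ := by
        rw [map_mul, map_pow, mul_comm (algebraMap _ _ (Stmt4Aux.detd k hnd) ^ e),
          mul_assoc, mul_inv_cancel₀ (pow_ne_zero _ hΔ), mul_one]
      rw [hFe]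
      exact mul_mem h1 (inv_mem (pow_mem h2 e))
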